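/- arXiv:1311.0481 — 2 statements merged into one kernel-verified Lean document; each statement's English description precedes it below -/
import Mathlib

section
/- Each operator U_BF(Z,z) preserves the Bargmann-Fock space: if φ(W) = exp(-(μ/4)|W|²) f(W) with f entire and ∫_{ℂⁿ} exp(-(μ/2)|W|²)|f(W)|² dW < ∞ (μ > 0), then U_BF(Z,z)φ has the same form and the same norm (U_BF(Z,z) is unitary on this space). -/
open Complex MeasureTheory

/-- The Bargmann–Fock operators on `ℂⁿ` (here `|Z|² = ∑ᵢ |Zᵢ|²`):
`(U_BF(Z,z)φ)(Z₀) = exp(iμ(z + (1/2)Im((1/2)Z² + conj(Z)·Z₀))) φ(Z₀ - Z)`. -/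
noncomputable def UBF {n : ℕ} (μ : ℝ) (g : (Fin n → ℂ) × ℝ)
    (φ : (Fin n → ℂ) → ℂ) : (Fin n → ℂ) → ℂ :=
  fun Z₀ => Complex.exp (Complex.I * (μ : ℂ) *
      ((g.2 : ℂ) + ((1/2 : ℝ) *
        ((1/2 : ℂ) * ∑ i, (g.1 i)^2 + ∑ i, (starRingEnd ℂ) (g.1 i) * Z₀ i).im : ℝ))) *
    φ (Z₀ - g.1)

/-- each `U_BF(Z,z)` preserves the Bargmann–Fock space: if
`φ(W) = exp(-(μ/4)|W|²) f(W)` with `f` entire and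
`∫ exp(-(μ/2)|W|²)|f(W)|² dW < ∞` (`μ > 0`), then `U_BF(Z,z)φ` has the same
form (with some entire `g` whose weighted integral is finite) and the same
norm. -/
theorem UBF_preserves_BargmannFock {n : ℕ} (μ : ℝ) (hμ : 0 < μ)
    (f : (Fin n → ℂ) → ℂ) (hf : Differentiable ℂ f)
    (hint : Integrable
      (fun W : Fin n → ℂ =>
        Real.exp (-(μ/2) * ∑ i, ‖W i‖^2) * ‖f W‖^2)
      volume)
    (Z : Fin n → ℂ) (z : ℝ) :
    ∃ g : (Fin n → ℂ) → ℂ, Differentiable ℂ g ∧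
      (UBF μ (Z, z) (fun W => (Real.exp (-(μ/4) * ∑ i, ‖W i‖^2) : ℂ) * f W)
        = fun W => (Real.exp (-(μ/4) * ∑ i, ‖W i‖^2) : ℂ) * g W) ∧
      Integrable
        (fun W : Fin n → ℂ =>
          Real.exp (-(μ/2) * ∑ i, ‖W i‖^2) * ‖g W‖^2)
        volume ∧
      (∫ W : Fin n → ℂ,
          Real.exp (-(μ/2) * ∑ i, ‖W i‖^2) * ‖g W‖^2)
        = ∫ W : Fin n → ℂ,
            Real.exp (-(μ/2) * ∑ i, ‖W i‖^2) * ‖f W‖^2 := by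
  classical
  set c : ℂ := Complex.I * (μ : ℂ) * (z : ℂ) +
      Complex.I * (μ : ℂ) * (((1/2 : ℝ) * ((1/2 : ℂ) * ∑ i, (Z i)^2).im : ℝ) : ℂ) -
      ((μ/4 * ∑ i, ‖Z i‖^2 : ℝ) : ℂ) with hc
  set g : (Fin n → ℂ) → ℂ := fun W =>
    Complex.exp (c + ((μ/2 : ℝ) : ℂ) * ∑ i, (starRingEnd ℂ) (Z i) * W i) * f (W - Z) with hg
  have h1 : ∀ (W : Fin n → ℂ) (i : Fin n), ‖W i - Z i‖^2
      = ‖W i‖^2 + ‖Z i‖^2 - 2 * ((starRingEnd ℂ) (Z i) * W i).re := by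
    intro W i
    rw [Complex.sq_norm, Complex.sq_norm, Complex.sq_norm, Complex.normSq_sub]
    have : (W i * (starRingEnd ℂ) (Z i)).re = ((starRingEnd ℂ) (Z i) * W i).re := by
      rw [mul_comm]
    rw [this]
  have hsub : ∀ W : Fin n → ℂ, ∑ i, ‖W i - Z i‖^2
      = (∑ i, ‖W i‖^2) + (∑ i, ‖Z i‖^2)
        - 2 * (∑ i, (starRingEnd ℂ) (Z i) * W i).re := by
    intro W
    simp only [h1 W]
    rw [Finset.sum_sub_distrib, Finset.sum_add_distrib, ← Finset.mul_sum, Complex.re_sum]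
  have hdiff : Differentiable ℂ g := by
    apply Differentiable.mul
    · apply Complex.differentiable_exp.comp
      apply (differentiable_const c).add
      apply Differentiable.const_mul
      apply Differentiable.fun_sum
      intro i _
      exact (differentiable_const _).mul (differentiable_apply i)
    · exact hf.comp (differentiable_id.sub (differentiable_const Z))
  have hEre : ∀ W : Fin n → ℂ,
      (c + ((μ/2 : ℝ) : ℂ) * ∑ i, (starRingEnd ℂ) (Z i) * W i).re
      = -(μ/4) * (∑ i, ‖Z i‖^2)
        + (μ/2) * (∑ i, (starRingEnd ℂ) (Z i) * W i).re := by
    intro W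
    simp only [hc, Complex.add_re, Complex.sub_re, Complex.mul_re, Complex.mul_im,
      Complex.I_re, Complex.I_im, Complex.ofReal_re, Complex.ofReal_im]
    ring
  have habs : (fun W : Fin n → ℂ =>
        Real.exp (-(μ/2) * ∑ i, ‖W i‖^2) * ‖g W‖^2)
      = fun W : Fin n → ℂ =>
        Real.exp (-(μ/2) * ∑ i, ‖(W - Z) i‖^2) * ‖f (W - Z)‖^2 := by
    funext W
    simp only [hg, map_mul, norm_mul, Complex.norm_exp]
    rw [mul_pow, sq (Real.exp _), ← Real.exp_add, ← mul_assoc, ← Real.exp_add]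
    congr 2
    simp only [Pi.sub_apply]
    rw [hsub W, hEre W]
    ring
  refine ⟨g, hdiff, ?_, ?_, ?_⟩
  · funext W
    simp only [UBF, Pi.sub_apply, hg]
    rw [Complex.ofReal_exp, Complex.ofReal_exp, ← mul_assoc, ← Complex.exp_add,
      ← mul_assoc, ← Complex.exp_add]
    congr 2
    rw [Complex.ofReal_mul, Complex.ofReal_mul, Complex.ofReal_sum]
    rw [show (∑ i, ((‖W i - Z i‖ ^ 2 : ℝ) : ℂ))
        = ((∑ i, ‖W i - Z i‖^2 : ℝ) : ℂ) by push_cast; ring]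
    rw [hsub W, hc]
    simp only [Complex.add_im]
    simp [Complex.ext_iff, Complex.add_re, Complex.add_im, Complex.sub_re, Complex.sub_im,
      Complex.mul_re, Complex.mul_im, Complex.I_re, Complex.I_im,
      Complex.ofReal_re, Complex.ofReal_im]
    constructor <;> ring
  · rw [habs]
    exact hint.comp_sub_right Z
  · rw [habs]
    exact integral_sub_right_eq_self
      (fun W : Fin n → ℂ =>
        Real.exp (-(μ/2) * ∑ i, ‖W i‖^2) * ‖f W‖^2) Z
end

section
/- With η_w := ρ(w)η satisfying the projective covariance η_{w·v} = e^{(iμ/2)Ω(w,v)} η_{w+v} for two projective families (in H and H') over a symplectic vector space V, the operator T = ∫_V |η'_v⟩⟨η_v| dv (assumed well-defined) satisfies T ∘ ρ(w) = ρ'(w) ∘ T for all w ∈ V. -/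
open MeasureTheory
open scoped InnerProductSpace

/-- Standard symplectic form on `V = ℝⁿ × ℝⁿ`. -/
noncomputable def Omega {n : ℕ} (v w : (Fin n → ℝ) × (Fin n → ℝ)) : ℝ :=
  ∑ i, v.1 i * w.2 i - ∑ i, v.2 i * w.1 i

/-- with projective covariance `ρ(w)η_v = e^{(iμ/2)Ω(w,v)} η_{v+w}`
for two families (in `H` and `H'`) over a symplectic vector space `V`, the
operator `T = ∫_V |η'_v⟩⟨η_v| dv` (assumed well-defined, weakly by an
absolutely convergent integral) satisfies `T ∘ ρ(w) = ρ'(w) ∘ T` for all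
`w ∈ V`. -/
theorem projective_intertwiner {n : ℕ} (μ : ℝ)
    {H H' : Type*}
    [NormedAddCommGroup H] [InnerProductSpace ℂ H] [CompleteSpace H]
    [NormedAddCommGroup H'] [InnerProductSpace ℂ H'] [CompleteSpace H']
    (ρ : (Fin n → ℝ) × (Fin n → ℝ) → (H ≃ₗᵢ[ℂ] H))
    (ρ' : (Fin n → ℝ) × (Fin n → ℝ) → (H' ≃ₗᵢ[ℂ] H'))
    (η : (Fin n → ℝ) × (Fin n → ℝ) → H)
    (η' : (Fin n → ℝ) × (Fin n → ℝ) → H')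
    (hη : ∀ w v, ρ w (η v)
      = Complex.exp (Complex.I * (μ : ℂ) / 2 * (Omega w v : ℂ)) • η (v + w))
    (hη' : ∀ w v, ρ' w (η' v)
      = Complex.exp (Complex.I * (μ : ℂ) / 2 * (Omega w v : ℂ)) • η' (v + w))
    (T : H →L[ℂ] H')
    (hconv : ∀ (φ : H) (φ' : H'),
      Integrable (fun v : (Fin n → ℝ) × (Fin n → ℝ) =>
        ⟪φ', η' v⟫_ℂ * ⟪η v, φ⟫_ℂ) volume)
    (hT : ∀ (φ : H) (φ' : H'),
      ⟪φ', T φ⟫_ℂ = ∫ v : (Fin n → ℝ) × (Fin n → ℝ),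
        ⟪φ', η' v⟫_ℂ * ⟪η v, φ⟫_ℂ) :
    ∀ (w : (Fin n → ℝ) × (Fin n → ℝ)) (φ : H), T (ρ w φ) = ρ' w (T φ) := by
  intro w φ
  apply ext_inner_left ℂ
  intro φ'
  set c : (Fin n → ℝ) × (Fin n → ℝ) → ℂ :=
    fun v => Complex.exp (Complex.I * (μ : ℂ) / 2 * (Omega w v : ℂ)) with hc
  have hcc : ∀ v, (starRingEnd ℂ) (c v) * c v = 1 := by
    intro v
    rw [hc]
    simp only [← Complex.exp_conj, ← Complex.exp_add]
    rw [← Complex.exp_zero]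
    congr 1
    simp [map_mul, map_div₀, Complex.conj_I, Complex.conj_ofReal, map_ofNat]
    ring
  -- Left-hand side computation for η
  have hL : ∀ v, ⟪η (v + w), ρ w φ⟫_ℂ = c v * ⟪η v, φ⟫_ℂ := by
    intro v
    have h1 : ⟪ρ w (η v), ρ w φ⟫_ℂ = ⟪η v, φ⟫_ℂ := (ρ w).inner_map_map _ _
    rw [hη w v, inner_smul_left] at h1
    linear_combination c v * h1 - ⟪η (v + w), ρ w φ⟫_ℂ * hcc v
  -- Right-hand side computation for η'
  have hR : ∀ v, ⟪(ρ' w).symm φ', η' v⟫_ℂ = c v * ⟪φ', η' (v + w)⟫_ℂ := by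
    intro v
    calc ⟪(ρ' w).symm φ', η' v⟫_ℂ
        = ⟪ρ' w ((ρ' w).symm φ'), ρ' w (η' v)⟫_ℂ := ((ρ' w).inner_map_map _ _).symm
      _ = ⟪φ', Complex.exp (Complex.I * (μ : ℂ) / 2 * (Omega w v : ℂ)) • η' (v + w)⟫_ℂ := by
          rw [(ρ' w).apply_symm_apply, hη' w v]
      _ = c v * ⟪φ', η' (v + w)⟫_ℂ := by
          rw [inner_smul_right]
  have hRHS : ⟪φ', ρ' w (T φ)⟫_ℂ
      = ∫ v : (Fin n → ℝ) × (Fin n → ℝ), c v * ⟪φ', η' (v + w)⟫_ℂ * ⟪η v, φ⟫_ℂ := by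
    calc ⟪φ', ρ' w (T φ)⟫_ℂ
        = ⟪ρ' w ((ρ' w).symm φ'), ρ' w (T φ)⟫_ℂ := by rw [(ρ' w).apply_symm_apply]
      _ = ⟪(ρ' w).symm φ', T φ⟫_ℂ := (ρ' w).inner_map_map _ _
      _ = ∫ v : (Fin n → ℝ) × (Fin n → ℝ), ⟪(ρ' w).symm φ', η' v⟫_ℂ * ⟪η v, φ⟫_ℂ :=
          hT φ ((ρ' w).symm φ')
      _ = _ := by
          congr 1
          funext v
          rw [hR v]
  haveI : (volume : Measure ((Fin n → ℝ) × (Fin n → ℝ))).IsAddRightInvariant := by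
    have hv : (volume : Measure ((Fin n → ℝ) × (Fin n → ℝ))) = volume.prod volume := rfl
    rw [hv]; infer_instance
  have hLHS : ⟪φ', T (ρ w φ)⟫_ℂ
      = ∫ v : (Fin n → ℝ) × (Fin n → ℝ), c v * ⟪φ', η' (v + w)⟫_ℂ * ⟪η v, φ⟫_ℂ := by
    calc ⟪φ', T (ρ w φ)⟫_ℂ
        = ∫ v : (Fin n → ℝ) × (Fin n → ℝ), ⟪φ', η' v⟫_ℂ * ⟪η v, ρ w φ⟫_ℂ :=
          hT (ρ w φ) φ'
      _ = ∫ v : (Fin n → ℝ) × (Fin n → ℝ), ⟪φ', η' (v + w)⟫_ℂ * ⟪η (v + w), ρ w φ⟫_ℂ :=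
          (integral_add_right_eq_self
            (fun v => ⟪φ', η' v⟫_ℂ * ⟪η v, ρ w φ⟫_ℂ) w).symm
      _ = _ := by
          congr 1
          funext v
          rw [hL v]
          ring
  rw [hLHS, hRHS]
end
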